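/- arXiv:1306.2053 — 2 statements merged into one kernel-verified Lean document; each statement's English description precedes it below -/
import Mathlib

section
/- Let G = (I ∪ T, E) be a finite graph where I and T are disjoint, I is 2-independent in G (every two distinct vertices of I are at graph distance at least 3), and the induced subgraph G[T] is a forest. Then for every edge labeling l: E → {N, F} there exists a coloring c: V → {−2, −1, 0, 1, 2} that is a threshold-coloring of G with respect to l with threshold t = 1. -/
open SimpleGraph

lemma isAcyclic_anti {W : Type*} {H H' : SimpleGraph W} (h : H ≤ H') (hH' : H'.IsAcyclic) :
    H.IsAcyclic := by
  intro v p hp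
  exact hH' (p.mapLe h) (hp.mapLe h)

lemma sign_exists {W : Type*} [Fintype W] (H : SimpleGraph W) (hH : H.IsAcyclic)
    (lab : Sym2 W → Bool) :
    ∃ s : W → Bool, ∀ u v, H.Adj u v → (s u = s v ↔ lab s(u, v) = true) := by
  classical
  suffices h : ∀ n (H : SimpleGraph W), H.edgeSet.ncard = n → H.IsAcyclic →
      ∃ s : W → Bool, ∀ u v, H.Adj u v → (s u = s v ↔ lab s(u, v) = true) from
    h _ H rfl hH
  intro n
  induction n using Nat.strong_induction_on with
  | _ n ih =>
    intro H hcard hH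
    rcases eq_or_ne n 0 with rfl | hn
    · have hempty : H.edgeSet = ∅ := (Set.ncard_eq_zero (Set.toFinite _)).mp hcard
      refine ⟨fun _ => true, fun u v huv => ?_⟩
      exact absurd ((H.mem_edgeSet).2 huv) (by simp [hempty])
    · have hne : H.edgeSet.Nonempty := by
        rw [Set.nonempty_iff_ne_empty]
        intro h
        rw [h] at hcard
        simp at hcard
        omega
      obtain ⟨e, he⟩ := hne
      induction e using Sym2.ind with
      | _ u v =>
      have huv : H.Adj u v := (H.mem_edgeSet).1 he
      set H' := H.deleteEdges {s(u, v)} with hH'def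
      have hle : H' ≤ H := fun a b hab => (deleteEdges_adj.1 hab).1
      have hbridge : H.IsBridge s(u, v) :=
        (isAcyclic_iff_forall_edge_isBridge.1 hH) he
      have hnr : ¬ H'.Reachable u v := fun h => hbridge h
      have hcard' : H'.edgeSet.ncard = n - 1 := by
        rw [hH'def, edgeSet_deleteEdges, Set.ncard_diff_singleton_of_mem he, hcard]
      obtain ⟨s, hs⟩ := ih (n - 1) (by omega) H' hcard' (isAcyclic_anti hle hH)
      set d : Bool := xor (xor (s u) (s v)) (!(lab s(u, v))) with hd
      set t : W → Bool := fun w => xor (s w) (if H'.Reachable v w then d else false) with ht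
      have htu : t u = s u := by
        rw [ht]
        dsimp only
        rw [if_neg (fun h => hnr h.symm)]
        simp
      have htv : t v = xor (s u) (!(lab s(u, v))) := by
        rw [ht]
        dsimp only
        rw [if_pos (Reachable.refl v), hd]
        cases s u <;> cases s v <;> cases lab s(u, v) <;> rfl
      have hmain : (t u = t v ↔ lab s(u, v) = true) := by
        rw [htu, htv]
        cases hsu : s u <;> cases hl : lab s(u, v) <;> decide
      refine ⟨t, fun a b hab => ?_⟩
      by_cases hcase : s(a, b) = s(u, v)
      · rcases Sym2.eq_iff.mp hcase with ⟨rfl, rfl⟩ | ⟨rfl, rfl⟩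
        · exact hmain
        · rw [Sym2.eq_swap, eq_comm]
          exact hmain
      · have hab' : H'.Adj a b := deleteEdges_adj.2 ⟨hab, by simpa using hcase⟩
        have hreach : H'.Reachable v a ↔ H'.Reachable v b :=
          ⟨fun h => h.trans hab'.reachable, fun h => h.trans hab'.symm.reachable⟩
        rw [← hs a b hab', ht]
        dsimp only
        by_cases hr : H'.Reachable v a
        · rw [if_pos hr, if_pos (hreach.1 hr)]
          cases s a <;> cases s b <;> cases d <;> simp
        · rw [if_neg hr, if_neg (fun h => hr (hreach.2 h))]
          simp

/-- If the vertex set of a finite graph `G` partitions into a 2-independent set `I`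
and a set `T` inducing a forest, `G` is (5,1)-total-threshold-colorable. -/
theorem stmt1 {V : Type*} [Fintype V] (G : SimpleGraph V) (I T : Set V)
    (hdisj : Disjoint I T) (hcover : I ∪ T = Set.univ)
    (hI : ∀ u ∈ I, ∀ v ∈ I, u ≠ v → ∀ p : G.Walk u v, 3 ≤ p.length)
    (hT : (G.induce T).IsAcyclic)
    (l : Sym2 V → Bool) :
    ∃ c : V → ℤ, (∀ v, c v ∈ ({-2, -1, 0, 1, 2} : Set ℤ)) ∧
      ∀ u v : V, G.Adj u v → (|c u - c v| ≤ 1 ↔ l s(u, v) = true) := by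
  classical
  have hmemI : ∀ v : V, v ∉ T → v ∈ I := by
    intro v hv
    have h : v ∈ I ∪ T := hcover ▸ Set.mem_univ v
    rcases h with h | h
    · exact h
    · exact absurd h hv
  have hInotadj : ∀ u ∈ I, ∀ v ∈ I, ¬ G.Adj u v := by
    intro u hu v hv h
    have := hI u hu v hv h.ne (Walk.cons h Walk.nil)
    simp [Walk.length_cons] at this
  have huniq : ∀ v : V, ∀ u ∈ I, ∀ u' ∈ I, G.Adj u v → G.Adj u' v → u = u' := by
    intro v u hu u' hu' h h'
    by_contra hne
    have := hI u hu u' hu' hne (Walk.cons h (Walk.cons h'.symm Walk.nil))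
    simp [Walk.length_cons] at this
  obtain ⟨s, hs⟩ := sign_exists (G.induce T) hT (fun e => l (e.map Subtype.val))
  set m : V → ℤ := fun v => if ∃ u ∈ I, G.Adj u v ∧ l s(u, v) = false then 2 else 1 with hm
  have hm12 : ∀ v, m v = 1 ∨ m v = 2 := by
    intro v
    by_cases h : ∃ u ∈ I, G.Adj u v ∧ l s(u, v) = false
    · right; simp [hm, h]
    · left; simp [hm, h]
  set c : V → ℤ := fun v => if h : v ∈ T then (if s ⟨v, h⟩ then m v else - m v) else 0 with hc
  refine ⟨c, ?_, ?_⟩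
  · intro v
    by_cases hv : v ∈ T
    · have hcv : c v = (if s ⟨v, hv⟩ then m v else - m v) := by simp [hc, hv]
      rw [hcv]
      rcases hm12 v with h1 | h1 <;> rw [h1] <;> cases s ⟨v, hv⟩ <;> simp
    · have hcv : c v = 0 := by simp [hc, hv]
      rw [hcv]; simp
  · have hmkey : ∀ u ∈ I, ∀ v : V, G.Adj u v → (m v = 1 ↔ l s(u, v) = true) := by
      intro u hu v hadj
      by_cases hex : ∃ u' ∈ I, G.Adj u' v ∧ l s(u', v) = false
      · have h2 : m v = 2 := by simp [hm, hex]
        obtain ⟨u', hu', hadj', hl'⟩ := hex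
        have : u' = u := huniq v u' hu' u hu hadj' hadj
        subst this
        simp [h2, hl']
      · have h1 : m v = 1 := by simp only [hm]; rw [if_neg hex]
        simp only [h1, true_iff]
        by_contra hfalse
        exact hex ⟨u, hu, hadj, by simpa using hfalse⟩
    intro u v hadj
    by_cases hu : u ∈ T <;> by_cases hv : v ∈ T
    · have hadj' : (G.induce T).Adj ⟨u, hu⟩ ⟨v, hv⟩ := hadj
      have hrel := hs _ _ hadj'
      simp only [Sym2.map_pair_eq] at hrel
      have hcu : c u = (if s ⟨u, hu⟩ then m u else - m u) := by simp [hc, hu]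
      have hcv : c v = (if s ⟨v, hv⟩ then m v else - m v) := by simp [hc, hv]
      rw [hcu, hcv, ← hrel]
      rcases hm12 u with h1 | h1 <;> rcases hm12 v with h2 | h2 <;>
        rw [h1, h2] <;>
        cases hsu : s ⟨u, hu⟩ <;> cases hsv : s ⟨v, hv⟩ <;> simp <;> decide
    · have hvI := hmemI v hv
      have hkey := hmkey v hvI u hadj.symm
      rw [Sym2.eq_swap] at hkey
      have hcu : c u = (if s ⟨u, hu⟩ then m u else - m u) := by simp [hc, hu]
      have hcv : c v = 0 := by simp [hc, hv]
      rw [hcu, hcv, ← hkey]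
      rcases hm12 u with h1 | h1 <;> rw [h1] <;> cases s ⟨u, hu⟩ <;> simp <;> decide
    · have huI := hmemI u hu
      have hkey := hmkey u huI v hadj
      have hcu : c u = 0 := by simp [hc, hu]
      have hcv : c v = (if s ⟨v, hv⟩ then m v else - m v) := by simp [hc, hv]
      rw [hcu, hcv, ← hkey]
      rcases hm12 v with h1 | h1 <;> rw [h1] <;> cases s ⟨v, hv⟩ <;> simp <;> decide
    · exact absurd hadj (hInotadj u (hmemI u hu) v (hmemI v hv))
end

section
/- Every finite directed graph obtained by orienting the edges of a finite grid graph such that every directed cycle would have to contain a vertex that is a source or a sink is acyclic. Precisely: if D is an orientation of a finite planar grid where for every 4-cycle the bottom-right vertex is a source or a sink (both incident oriented edges outgoing or both incoming), then D contains no directed cycle. -/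
/-- An orientation `D` of the m × n grid graph (edges only between grid points at
distance 1, with exactly one direction per edge) in which the bottom-right vertex of
every unit square is a source or a sink of that square contains no directed cycle. -/
theorem stmt17 (m n : ℕ) (D : ℕ × ℕ → ℕ × ℕ → Prop)
    (hgrid : ∀ u v : ℕ × ℕ, D u v →
      u.1 < m ∧ u.2 < n ∧ v.1 < m ∧ v.2 < n ∧
      ((u.1 = v.1 ∧ (u.2 + 1 = v.2 ∨ v.2 + 1 = u.2)) ∨
       (u.2 = v.2 ∧ (u.1 + 1 = v.1 ∨ v.1 + 1 = u.1))))
    (horient : ∀ u v : ℕ × ℕ, u.1 < m → u.2 < n → v.1 < m → v.2 < n →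
      ((u.1 = v.1 ∧ (u.2 + 1 = v.2 ∨ v.2 + 1 = u.2)) ∨
       (u.2 = v.2 ∧ (u.1 + 1 = v.1 ∨ v.1 + 1 = u.1))) →
      (D u v ↔ ¬D v u))
    (hsq : ∀ i j : ℕ, i + 1 < m → j + 1 < n →
      (D (i + 1, j + 1) (i, j + 1) ∧ D (i + 1, j + 1) (i + 1, j)) ∨
      (D (i, j + 1) (i + 1, j + 1) ∧ D (i + 1, j) (i + 1, j + 1))) :
    ∀ v : ℕ × ℕ, ¬Relation.TransGen D v v := by
  classical
  intro v hv
  -- No edge goes both ways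
  have hop : ∀ u w : ℕ × ℕ, D u w → ¬ D w u := by
    intro u w h hw
    obtain ⟨h1, h2, h3, h4, h5⟩ := hgrid u w h
    exact (horient u w h1 h2 h3 h4 h5).mp h hw
  -- The set of vertices on the cycle through v
  set S : Set (ℕ × ℕ) :=
    {u | Relation.ReflTransGen D v u ∧ Relation.ReflTransGen D u v} with hSdef
  have hvS : v ∈ S := ⟨Relation.ReflTransGen.refl, Relation.ReflTransGen.refl⟩
  have hcyc : ∀ u ∈ S, Relation.TransGen D u u := by
    intro u hu
    exact Relation.TransGen.trans_right hu.2 (Relation.TransGen.trans_left hv hu.1)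
  have hgridS : ∀ u ∈ S, u.1 < m ∧ u.2 < n := by
    intro u hu
    obtain ⟨c, hc, -⟩ := (Relation.TransGen.head'_iff).mp (hcyc u hu)
    obtain ⟨h1, h2, -⟩ := hgrid u c hc
    exact ⟨h1, h2⟩
  -- Take the vertex of the cycle with maximal f
  set T : Finset (ℕ × ℕ) :=
    ((Finset.range m) ×ˢ (Finset.range n)).filter (fun u => u ∈ S) with hTdef
  have hmemT : ∀ u ∈ S, u ∈ T := by
    intro u hu
    obtain ⟨h1, h2⟩ := hgridS u hu
    simp [hTdef, Finset.mem_filter, Finset.mem_product, h1, h2, hu]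
  have hTne : T.Nonempty := ⟨v, hmemT v hvS⟩
  obtain ⟨u0, hu0T, hmax⟩ := T.exists_max_image (fun p => p.1 * n + p.2) hTne
  have hu0S : u0 ∈ S := by
    simpa [hTdef] using (Finset.mem_filter.mp hu0T).2
  -- out-neighbor b and in-neighbor a of u0 within S
  obtain ⟨b, hb, hbu0⟩ := (Relation.TransGen.head'_iff).mp (hcyc u0 hu0S)
  obtain ⟨a, hu0a, ha⟩ := (Relation.TransGen.tail'_iff).mp (hcyc u0 hu0S)
  have hbS : b ∈ S := ⟨hu0S.1.tail hb, hbu0.trans hu0S.2⟩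
  have haS : a ∈ S := ⟨hu0S.1.trans hu0a, Relation.ReflTransGen.head ha hu0S.2⟩
  have hfa : a.1 * n + a.2 ≤ u0.1 * n + u0.2 := hmax a (hmemT a haS)
  have hfb : b.1 * n + b.2 ≤ u0.1 * n + u0.2 := hmax b (hmemT b hbS)
  -- classify the neighbors: they are the left or the up neighbor of u0
  have hclass : ∀ w : ℕ × ℕ,
      ((w.1 = u0.1 ∧ (w.2 + 1 = u0.2 ∨ u0.2 + 1 = w.2)) ∨
       (w.2 = u0.2 ∧ (w.1 + 1 = u0.1 ∨ u0.1 + 1 = w.1))) →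
      w.2 < n → w.1 * n + w.2 ≤ u0.1 * n + u0.2 →
      (w.1 = u0.1 ∧ w.2 + 1 = u0.2) ∨ (w.2 = u0.2 ∧ w.1 + 1 = u0.1) := by
    intro w hadj hwn hfw
    rcases hadj with ⟨h1, h2 | h2⟩ | ⟨h1, h2 | h2⟩
    · exact Or.inl ⟨h1, h2⟩
    · exfalso; rw [h1] at hfw; omega
    · exact Or.inr ⟨h1, h2⟩
    · exfalso
      have : (u0.1 + 1) * n + w.2 ≤ u0.1 * n + u0.2 := by
        rw [← h2] at hfw; exact hfw
      have hu02 : u0.2 < n := (hgridS u0 hu0S).2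
      nlinarith
  obtain ⟨ha1, ha2, ha3, ha4, ha5⟩ := hgrid a u0 ha
  obtain ⟨hb1', hb2', hb3, hb4, hb5⟩ := hgrid u0 b hb
  have hb5' : (b.1 = u0.1 ∧ (b.2 + 1 = u0.2 ∨ u0.2 + 1 = b.2)) ∨
      (b.2 = u0.2 ∧ (b.1 + 1 = u0.1 ∨ u0.1 + 1 = b.1)) := by
    rcases hb5 with ⟨h1, h2⟩ | ⟨h1, h2⟩
    · exact Or.inl ⟨h1.symm, h2.symm⟩
    · exact Or.inr ⟨h1.symm, h2.symm⟩
  have hA := hclass a ha5 ha2 hfa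
  have hB := hclass b hb5' hb4 hfb
  obtain ⟨i, j⟩ := u0
  obtain ⟨a1, a2⟩ := a
  obtain ⟨b1, b2⟩ := b
  simp only [Prod.fst, Prod.snd] at hA hB
  rcases hA with ⟨hA1, hA2⟩ | ⟨hA1, hA2⟩ <;> rcases hB with ⟨hB1, hB2⟩ | ⟨hB1, hB2⟩
  · -- a = b = (i, j-1)
    have : (a1, a2) = (b1, b2) := by
      rw [Prod.mk.injEq]; omega
    rw [this] at ha
    exact hop _ _ ha hb
  · -- a = (i, j-1), b = (j-direction?) b = (i-1, j) : use the square at (b1, a2)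
    have hsq' := hsq b1 a2 (by omega) (by omega)
    have e1 : b1 + 1 = i := hB2
    have e2 : a2 + 1 = j := hA2
    rw [e1, e2] at hsq'
    rcases hsq' with ⟨h1, h2⟩ | ⟨h1, h2⟩
    · -- D (i,j) (b1, j) and D (i,j) (i, a2) : second contradicts ha
      have : (a1, a2) = (i, a2) := by rw [Prod.mk.injEq]; omega
      rw [this] at ha
      exact hop _ _ ha h2
    · -- D (b1,j) (i,j) : contradicts hb
      have : (b1, b2) = (b1, j) := by rw [Prod.mk.injEq]; omega
      rw [this] at hb
      exact hop _ _ hb h1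
  · -- a = (i-1, j), b = (i, j-1) : square at (a1, b2)
    have hsq' := hsq a1 b2 (by omega) (by omega)
    have e1 : a1 + 1 = i := hA2
    have e2 : b2 + 1 = j := hB2
    rw [e1, e2] at hsq'
    rcases hsq' with ⟨h1, h2⟩ | ⟨h1, h2⟩
    · -- D (i,j) (a1, j) contradicts ha
      have : (a1, a2) = (a1, j) := by rw [Prod.mk.injEq]; omega
      rw [this] at ha
      exact hop _ _ ha h1
    · -- D (i, b2) (i,j) contradicts hb
      have : (b1, b2) = (i, b2) := by rw [Prod.mk.injEq]; omega
      rw [this] at hb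
      exact hop _ _ hb h2
  · -- a = b = (i-1, j)
    have : (a1, a2) = (b1, b2) := by
      rw [Prod.mk.injEq]; omega
    rw [this] at ha
    exact hop _ _ ha hb
end
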